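/- Let A be a nontrivial commutative ring, let F ∈ A[y] be a monic polynomial of degree d, let N be a positive divisor of d, and let ψ ∈ A[y] be monic of degree m = d/N. Suppose F = Σ_{i=0}^{N} a_i ψ^i where a_i ∈ A[y] satisfy deg a_i < m for all i < N and a_N = 1 (the ψ-adic expansion of F). Then deg(F − ψ^N) < d − m if and only if a_{N−1} = 0. In other words, ψ is the N-th approximate root of F if and only if the coefficient of ψ^{N−1} in the ψ-adic expansion of F vanishes. -/

import Mathlib

open Polynomial Finset

private lemma aux_mul_lt {A : Type*} [CommRing A] [Nontrivial A] (p q : A[X]) (hq : q.Monic)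
    (c : ℕ) (hp : p.degree < (c : WithBot ℕ)) :
    (p * q).degree < ((c + q.natDegree : ℕ) : WithBot ℕ) := by
  rcases eq_or_ne p 0 with rfl | h
  · simp only [zero_mul, Polynomial.degree_zero]
    exact WithBot.bot_lt_coe _
  · rw [hq.degree_mul, Polynomial.degree_eq_natDegree hq.ne_zero, Nat.cast_add]
    exact WithBot.add_lt_add_right (WithBot.coe_ne_bot) hp

/-- **Characterisation of the approximate root via the `ψ`-adic expansion.**
Let `F ∈ A[y]` be monic of degree `d`, `N` a positive divisor of `d`, and `ψ` monic of
degree `m = d / N`. If `F = Σ_{i=0}^{N} a_i ψ^i` is the `ψ`-adic expansion of `F`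
(so `deg a_i < m` for `i < N` and `a_N = 1`), then `deg (F - ψ ^ N) < d - m` if and only
if `a_{N-1} = 0`. -/
theorem approximate_root_iff_coeff_vanishes {A : Type*} [CommRing A] [Nontrivial A]
    (F ψ : A[X]) (d N m : ℕ) (a : ℕ → A[X])
    (hF : F.Monic) (hFd : F.natDegree = d) (hN : 0 < N) (hdvd : N ∣ d) (hm : m = d / N)
    (hψ : ψ.Monic) (hψd : ψ.natDegree = m)
    (hexp : F = ∑ i ∈ Finset.range (N + 1), a i * ψ ^ i)
    (hdeg : ∀ i < N, (a i).degree < (m : WithBot ℕ))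
    (haN : a N = 1) :
    (F - ψ ^ N).degree < ((d - m : ℕ) : WithBot ℕ) ↔ a (N - 1) = 0 := by
  have hdm : d = N * m := by
    rw [hm, Nat.mul_div_cancel' hdvd]
  have hstep : d - m = (N - 1) * m := by
    rw [hdm, Nat.sub_mul, one_mul]
  have hFS : F - ψ ^ N = ∑ i ∈ Finset.range N, a i * ψ ^ i := by
    rw [hexp, Finset.sum_range_succ, haN, one_mul]
    ring
  have termbound : ∀ i < N, (a i * ψ ^ i).degree < (((i + 1) * m : ℕ) : WithBot ℕ) := by
    intro i hi
    have h := aux_mul_lt (a i) (ψ ^ i) (hψ.pow i) m (hdeg i hi)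
    have hnd : (ψ ^ i).natDegree = i * m := by
      rw [hψ.natDegree_pow, hψd]
    rw [hnd] at h
    have : (i + 1) * m = m + i * m := by ring
    rwa [this]
  obtain ⟨k, rfl⟩ : ∃ k, N = k + 1 := ⟨N - 1, (Nat.succ_pred_eq_of_pos hN).symm⟩
  simp only [Nat.add_sub_cancel] at *
  rw [hFS, hstep]
  have htail : (∑ i ∈ Finset.range k, a i * ψ ^ i).degree < ((k * m : ℕ) : WithBot ℕ) := by
    refine lt_of_le_of_lt (Polynomial.degree_sum_le _ _) ?_
    rw [Finset.sup_lt_iff (by exact WithBot.bot_lt_coe _)]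
    intro i hi
    rw [Finset.mem_range] at hi
    refine lt_of_lt_of_le (termbound i (by omega)) ?_
    exact_mod_cast WithBot.coe_le_coe.mpr (Nat.mul_le_mul_right m (by omega))
  constructor
  · intro h
    by_contra hne
    have htop : ((k * m : ℕ) : WithBot ℕ) ≤ (a k * ψ ^ k).degree := by
      rw [(hψ.pow k).degree_mul, Polynomial.degree_eq_natDegree (hψ.pow k).ne_zero,
        hψ.natDegree_pow, hψd]
      have h0 : (0 : WithBot ℕ) ≤ (a k).degree := Polynomial.zero_le_degree_iff.mpr hne
      calc ((k * m : ℕ) : WithBot ℕ) = 0 + ((k * m : ℕ) : WithBot ℕ) := by rw [zero_add]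
        _ ≤ (a k).degree + ((k * m : ℕ) : WithBot ℕ) := add_le_add_left h0 _
    have hsum : (∑ i ∈ Finset.range (k + 1), a i * ψ ^ i).degree = (a k * ψ ^ k).degree := by
      rw [Finset.sum_range_succ]
      exact Polynomial.degree_add_eq_right_of_degree_lt (lt_of_lt_of_le htail htop)
    rw [hsum] at h
    exact absurd (lt_of_le_of_lt htop h) (lt_irrefl _)
  · intro h
    rw [Finset.sum_range_succ, h, zero_mul, add_zero]
    exact htail
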